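/- If p and q are integers with p - q ≠ 1, then for all n ≥ 1, Σ_{i=1}^n i·U_i = (1/(p-q-1))·(n·(U_{n+1} - q·U_n) - Ω(n)/(p-q-1)), where Ω(n) = U_{n+1} - 2q·U_n + q^2·U_{n-1} + q - 1. -/

import Mathlib

def lucasU (p q : ℤ) : ℕ → ℤ
  | 0 => 0
  | 1 => 1
  | n + 2 => p * lucasU p q (n + 1) - q * lucasU p q n

theorem stmt11 (p q : ℤ) (h : p - q ≠ 1) (n : ℕ) (hn : 1 ≤ n) :
    (∑ i ∈ Finset.Icc 1 n, (i : ℚ) * (lucasU p q i : ℚ)) =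
      (1 / ((p : ℚ) - q - 1)) *
        ((n : ℚ) * ((lucasU p q (n + 1) : ℚ) - q * lucasU p q n) -
          ((lucasU p q (n + 1) : ℚ) - 2 * q * lucasU p q n +
              (q : ℚ) ^ 2 * lucasU p q (n - 1) + q - 1) / ((p : ℚ) - q - 1)) := by
  have h' : ((p : ℚ) - q) ≠ 1 := by
    intro hh
    apply h
    exact_mod_cast (by push_cast; linarith : ((p - q : ℤ) : ℚ) = 1)
  have hd : (p : ℚ) - q - 1 ≠ 0 := sub_ne_zero.mpr h'
  induction n, hn using Nat.le_induction with
  | base =>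
    simp only [Finset.Icc_self, Finset.sum_singleton]
    show (1 : ℚ) * (lucasU p q 1 : ℚ) = _
    have e2 : lucasU p q 2 = p * lucasU p q 1 - q * lucasU p q 0 := rfl
    have e0 : lucasU p q 0 = 0 := rfl
    simp only [e2, lucasU, Nat.sub_self, e0]
    push_cast
    field_simp
    ring
  | succ n hn ih =>
    rw [Finset.sum_Icc_succ_top (by omega : 1 ≤ n + 1), ih]
    obtain ⟨m, rfl⟩ : ∃ m, n = m + 1 := ⟨n - 1, by omega⟩
    have e1 : lucasU p q (m + 1 + 1 + 1) = p * lucasU p q (m + 2) - q * lucasU p q (m + 1) := rfl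
    have e2 : lucasU p q (m + 2) = p * lucasU p q (m + 1) - q * lucasU p q m := rfl
    have hs1 : m + 1 + 1 - 1 = m + 1 := rfl
    have hs2 : m + 1 - 1 = m := rfl
    rw [hs1, hs2, e1, e2]
    push_cast
    field_simp
    ring
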